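/- Lower bound on the step length by the new (sub)gradient: under the setting of the composite step, let f have L-Lipschitz-continuous Hessian (L > 0), let s be a subgradient of ψ at x, let H be symmetric PSD with ‖H − ∇²f(x)‖ ≤ β for some β ≥ 0, and let α ≥ √(L‖∇f(x) + s‖/2) + β with α > 0. If x⁺ is a composite step from x with parameters (H, α), then r := ‖x⁺ − x‖ satisfies r ≥ ‖F'(x⁺)‖/(2α), where F'(x⁺) := ∇f(x⁺) − ∇f(x) − (H + αI)(x⁺ − x). -/

import Mathlib

open scoped RealInnerProductSpace
open Real Set

def IsSymmPSD {n : ℕ} (H : EuclideanSpace ℝ (Fin n) →L[ℝ] EuclideanSpace ℝ (Fin n)) : Prop :=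
  (∀ u v, ⟪H u, v⟫ = ⟪u, H v⟫) ∧ ∀ u, 0 ≤ ⟪H u, u⟫

def IsSubgradAt {n : ℕ} (ψ : EuclideanSpace ℝ (Fin n) → ℝ)
    (s x : EuclideanSpace ℝ (Fin n)) : Prop :=
  ∀ y, ψ x + ⟪s, y - x⟫ ≤ ψ y

def CompositeStep {n : ℕ} (g : EuclideanSpace ℝ (Fin n))
    (H : EuclideanSpace ℝ (Fin n) →L[ℝ] EuclideanSpace ℝ (Fin n)) (α : ℝ)
    (ψ : EuclideanSpace ℝ (Fin n) → ℝ) (x xp : EuclideanSpace ℝ (Fin n)) : Prop :=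
  ∀ y, ψ xp ≤ ⟪g + (H (xp - x) + α • (xp - x)), y - xp⟫ + ψ y

noncomputable def hess {n : ℕ} (f : EuclideanSpace ℝ (Fin n) → ℝ)
    (x : EuclideanSpace ℝ (Fin n)) :
    EuclideanSpace ℝ (Fin n) →L[ℝ] EuclideanSpace ℝ (Fin n) :=
  fderiv ℝ (gradient f) x

lemma gradient_contDiff' {n : ℕ} (f : EuclideanSpace ℝ (Fin n) → ℝ) (hf : ContDiff ℝ 2 f) :
    ContDiff ℝ 1 (gradient f) := by
  have h1 : ContDiff ℝ 1 (fun x => fderiv ℝ f x) := (hf.fderiv_right (by norm_num))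
  have : gradient f = fun x => (InnerProductSpace.toDual ℝ (EuclideanSpace ℝ (Fin n))).symm (fderiv ℝ f x) := rfl
  rw [this]
  exact (InnerProductSpace.toDual ℝ (EuclideanSpace ℝ (Fin n))).symm.contDiff.comp h1

lemma taylor_bound' {n : ℕ} (f : EuclideanSpace ℝ (Fin n) → ℝ) (hf : ContDiff ℝ 2 f)
    (L : ℝ) (hL : 0 ≤ L)
    (hLip : ∀ x y, ‖hess f x - hess f y‖ ≤ L * ‖x - y‖)
    (x d : EuclideanSpace ℝ (Fin n)) :
    ‖gradient f (x + d) - gradient f x - hess f x d‖ ≤ L / 2 * ‖d‖ ^ 2 := by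
  have hg : ContDiff ℝ 1 (gradient f) := gradient_contDiff' f hf
  have hdiff : Differentiable ℝ (gradient f) := hg.differentiable (by norm_num)
  have key : ∀ t : ℝ, HasDerivAt (fun t : ℝ => gradient f (x + t • d))
      (hess f (x + t • d) d) t := by
    intro t
    have h1 : HasDerivAt (fun t : ℝ => x + t • d) d t := by
      simpa using ((hasDerivAt_id t).smul_const d).const_add x
    exact ((hdiff (x + t • d)).hasFDerivAt).comp_hasDerivAt t h1
  have hcont : Continuous fun t : ℝ => hess f (x + t • d) d := by
    have h2 : Continuous fun y : EuclideanSpace ℝ (Fin n) => hess f y := hg.continuous_fderiv (by norm_num)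
    exact (ContinuousLinearMap.apply ℝ (EuclideanSpace ℝ (Fin n)) d).continuous.comp
      (h2.comp (continuous_const.add (continuous_id.smul continuous_const)))
  have hint : gradient f (x + d) - gradient f x
      = ∫ t in (0:ℝ)..1, hess f (x + t • d) d := by
    rw [intervalIntegral.integral_eq_sub_of_hasDerivAt (fun t _ => key t)
      (hcont.intervalIntegrable 0 1)]
    simp
  have hrepr : gradient f (x + d) - gradient f x - hess f x d
      = ∫ t in (0:ℝ)..1, (hess f (x + t • d) d - hess f x d) := by
    rw [intervalIntegral.integral_sub (hcont.intervalIntegrable 0 1)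
      (intervalIntegrable_const), intervalIntegral.integral_const, ← hint]
    simp
  rw [hrepr]
  have hb : ∀ t ∈ Set.uIoc (0:ℝ) 1,
      ‖hess f (x + t • d) d - hess f x d‖ ≤ L * ‖d‖ ^ 2 * t := by
    intro t ht
    rw [Set.uIoc_of_le (by norm_num : (0:ℝ) ≤ 1)] at ht
    have ht0 : 0 ≤ t := le_of_lt ht.1
    calc ‖hess f (x + t • d) d - hess f x d‖
        = ‖(hess f (x + t • d) - hess f x) d‖ := by simp
      _ ≤ ‖hess f (x + t • d) - hess f x‖ * ‖d‖ := ContinuousLinearMap.le_opNorm _ _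
      _ ≤ (L * ‖x + t • d - x‖) * ‖d‖ := by
          gcongr; exact hLip _ _
      _ = L * ‖d‖ ^ 2 * t := by
          rw [add_sub_cancel_left, norm_smul, Real.norm_eq_abs, abs_of_nonneg ht0]; ring
  calc ‖∫ t in (0:ℝ)..1, (hess f (x + t • d) d - hess f x d)‖
      ≤ |∫ t in (0:ℝ)..1, L * ‖d‖ ^ 2 * t| := by
        apply intervalIntegral.norm_integral_le_abs_of_norm_le
        · filter_upwards [MeasureTheory.ae_restrict_mem measurableSet_uIoc] with t ht
          exact hb t ht
        · exact (continuous_const.mul continuous_id).intervalIntegrable 0 1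
    _ = ∫ t in (0:ℝ)..1, L * ‖d‖ ^ 2 * t := by
        apply abs_of_nonneg
        apply intervalIntegral.integral_nonneg (by norm_num)
        intro t ht
        have : 0 ≤ t := ht.1
        positivity
    _ = L / 2 * ‖d‖ ^ 2 := by
        rw [intervalIntegral.integral_const_mul]
        simp [integral_id]
        ring

/-- Lower bound on the step length by the new (sub)gradient
`F'(x⁺) = ∇f(x⁺) − ∇f(x) − (H + αI)(x⁺ − x)`: it holds `r ≥ ‖F'(x⁺)‖/(2α)`. -/
theorem composite_step_length_lower_bound {n : ℕ}
    (f : EuclideanSpace ℝ (Fin n) → ℝ) (hf : ContDiff ℝ 2 f)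
    (L : ℝ) (hL : 0 < L)
    (hLip : ∀ x y, ‖hess f x - hess f y‖ ≤ L * ‖x - y‖)
    (ψ : EuclideanSpace ℝ (Fin n) → ℝ) (hψ : ConvexOn ℝ Set.univ ψ)
    (x xp s : EuclideanSpace ℝ (Fin n)) (hs : IsSubgradAt ψ s x)
    (H : EuclideanSpace ℝ (Fin n) →L[ℝ] EuclideanSpace ℝ (Fin n)) (hH : IsSymmPSD H)
    (β : ℝ) (hβ : 0 ≤ β) (hHerr : ‖H - hess f x‖ ≤ β)
    (α : ℝ) (hαpos : 0 < α)
    (hα : Real.sqrt (L * ‖gradient f x + s‖ / 2) + β ≤ α)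
    (hstep : CompositeStep (gradient f x) H α ψ x xp) :
    ‖gradient f xp - gradient f x - (H (xp - x) + α • (xp - x))‖ / (2 * α)
      ≤ ‖xp - x‖ := by
  by_cases hxp : xp = x
  · subst hxp
    simp
  set d := xp - x with hdd
  have hr : (0:ℝ) < ‖d‖ := by
    rw [norm_pos_iff, hdd, sub_ne_zero]
    exact hxp
  set A := ‖gradient f x + s‖ with hA
  have hAnn : 0 ≤ A := norm_nonneg _
  -- step length upper bound
  have hkey : α * ‖d‖ ≤ A := by
    have h1 := hstep x
    have h2 := hs xp
    have e0 : x - xp = -d := by rw [hdd]; abel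
    rw [e0, inner_neg_right, inner_add_left, inner_add_left, real_inner_smul_left] at h1
    have e2 : ⟪s, xp - x⟫ = ⟪s, d⟫ := rfl
    rw [e2] at h2
    have hPSD := hH.2 d
    have hdd2 : ⟪d, d⟫ = ‖d‖ ^ 2 := real_inner_self_eq_norm_sq d
    have h4 : α * ‖d‖ ^ 2 ≤ -⟪gradient f x + s, d⟫ := by
      rw [inner_add_left]
      nlinarith [h1, h2, hPSD]
    have h5 : -⟪gradient f x + s, d⟫ ≤ A * ‖d‖ :=
      (neg_le_abs _).trans ((abs_real_inner_le_norm _ _))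
    nlinarith [h4, h5, hr]
  have hαβ : 0 ≤ α - β := le_trans (Real.sqrt_nonneg _) (by linarith)
  have hsq : L * A / 2 ≤ (α - β) ^ 2 := by
    have h0 : Real.sqrt (L * A / 2) ≤ α - β := by linarith
    have hnn : 0 ≤ L * A / 2 := by positivity
    nlinarith [Real.sq_sqrt hnn, Real.sqrt_nonneg (L * A / 2)]
  have hLr : L / 2 * ‖d‖ ≤ α - β := by
    nlinarith [hkey, hsq, hαpos, hβ, hαβ, hL, hr, mul_le_mul_of_nonneg_left hkey (by linarith : (0:ℝ) ≤ L / 2)]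
  have hT : ‖gradient f xp - gradient f x - hess f x d‖ ≤ L / 2 * ‖d‖ ^ 2 := by
    have := taylor_bound' f hf L hL.le hLip x d
    rwa [show x + d = xp by rw [hdd]; abel] at this
  have b1 : ‖(hess f x - H) d‖ ≤ β * ‖d‖ := by
    refine (ContinuousLinearMap.le_opNorm _ _).trans ?_
    rw [norm_sub_rev]
    exact mul_le_mul_of_nonneg_right hHerr (norm_nonneg _)
  have b2 : ‖α • d‖ = α * ‖d‖ := by
    rw [norm_smul, Real.norm_eq_abs, abs_of_pos hαpos]
  have hF : ‖gradient f xp - gradient f x - (H d + α • d)‖ ≤ 2 * α * ‖d‖ := by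
    have e : gradient f xp - gradient f x - (H d + α • d)
        = (gradient f xp - gradient f x - hess f x d) + ((hess f x - H) d) - α • d := by
      simp only [ContinuousLinearMap.sub_apply]
      abel
    rw [e]
    refine le_trans (norm_sub_le _ _) ?_
    refine le_trans (add_le_add (norm_add_le _ _) le_rfl) ?_
    rw [b2]
    nlinarith [hT, hLr, hr, b1, mul_le_mul_of_nonneg_right hLr hr.le]
  rw [div_le_iff₀ (by positivity)]
  linarith [hF]
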